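/- arXiv:2011.04914 — 2 statements merged into one kernel-verified Lean document; each statement's English description precedes it below -/
import Mathlib

section
/- For an odd prime p, the binary code generated by the incidence matrix of the unit graph G(Z_{2p}) has length p(p-1), dimension 2p-1, and minimum distance p-1. -/
open SimpleGraph Finset
open scoped Classical

/-- The unit graph of a commutative ring: distinct `x, y` adjacent iff `x + y` is a unit. -/
def unitGraphR (R : Type*) [CommRing R] : SimpleGraph R where
  Adj x y := x ≠ y ∧ IsUnit (x + y)
  symm := ⟨fun x y ⟨h1, h2⟩ => ⟨h1.symm, by rwa [add_comm]⟩⟩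
  loopless := ⟨fun x ⟨h, _⟩ => h rfl⟩

/-- The unit graph of `ZMod n`. -/
def unitGraph (n : ℕ) : SimpleGraph (ZMod n) := unitGraphR (ZMod n)

/-- The number of edges of `G` with one endpoint in `W` and the other outside `W`. -/
noncomputable def cutSize {V : Type*} [Fintype V] (G : SimpleGraph V) (W : Finset V) : ℕ :=
  (G.edgeFinset.filter (fun e => (∃ x ∈ e, x ∈ W) ∧ (∃ x ∈ e, x ∉ W))).card

/-- The edge-connectivity of `G`: minimum cut size over nonempty proper vertex subsets. -/
noncomputable def edgeConn {V : Type*} [Fintype V] (G : SimpleGraph V) : ℕ :=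
  sInf {n | ∃ W : Finset V, W.Nonempty ∧ W ≠ Finset.univ ∧ n = cutSize G W}

/-- The incidence matrix of `G` over `F_2`, rows indexed by vertices, columns by edges. -/
noncomputable def incMat {V : Type*} [Fintype V] (G : SimpleGraph V) :
    Matrix V G.edgeFinset (ZMod 2) :=
  fun v e => if v ∈ (e : Sym2 V) then 1 else 0

/-- The binary code generated by the rows of the incidence matrix of `G`. -/
noncomputable def rowCode {V : Type*} [Fintype V] (G : SimpleGraph V) :
    Submodule (ZMod 2) (G.edgeFinset → ZMod 2) :=
  Submodule.span (ZMod 2) (Set.range (incMat G))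

/-- The minimum Hamming weight of a nonzero codeword of the incidence-matrix code of `G`. -/
noncomputable def minDist {V : Type*} [Fintype V] (G : SimpleGraph V) : ℕ :=
  sInf {w | ∃ c ∈ rowCode G, c ≠ 0 ∧ w = hammingNorm c}

/-! ### Generic linear-algebra lemmas -/

section LinAlg

variable {V : Type*} [Fintype V] (G : SimpleGraph V)

noncomputable def phi : (V → ZMod 2) →ₗ[ZMod 2] (↥G.edgeFinset → ZMod 2) where
  toFun x := fun e => ∑ v, x v * incMat G v e
  map_add' := by
    intro x y; funext e
    simp [add_mul, Finset.sum_add_distrib]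
  map_smul' := by
    intro c x; funext e
    simp [Finset.mul_sum, mul_assoc]

lemma phi_single (v : V) : phi G (Pi.single v 1) = incMat G v := by
  funext e
  simp only [phi, LinearMap.coe_mk, AddHom.coe_mk]
  rw [Finset.sum_eq_single v]
  · simp
  · intro w _ hw; simp [Pi.single_apply, hw]
  · intro h; exact absurd (mem_univ v) h

lemma range_phi : LinearMap.range (phi G) = rowCode G := by
  apply le_antisymm
  · rintro _ ⟨x, rfl⟩
    have : phi G x = ∑ v, x v • incMat G v := by
      funext e
      simp [phi, Finset.sum_apply]
    rw [this]
    exact Submodule.sum_mem _ fun v _ =>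
      Submodule.smul_mem _ _ (Submodule.subset_span ⟨v, rfl⟩)
  · rw [rowCode, Submodule.span_le]
    rintro _ ⟨v, rfl⟩
    exact ⟨Pi.single v 1, phi_single G v⟩

lemma phi_apply_edge (x : V → ZMod 2) (u w : V) (huw : u ≠ w)
    (he : s(u, w) ∈ G.edgeFinset) :
    phi G x ⟨s(u, w), he⟩ = x u + x w := by
  simp only [phi, LinearMap.coe_mk, AddHom.coe_mk]
  have key : ∀ v : V, x v * incMat G v ⟨s(u, w), he⟩
      = (if v = u then x v else 0) + (if v = w then x v else 0) := by
    intro v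
    have : incMat G v ⟨s(u, w), he⟩ = if v = u ∨ v = w then 1 else 0 := by
      simp [incMat, Sym2.mem_iff]
    rw [this]
    by_cases h1 : v = u <;> by_cases h2 : v = w <;> simp_all
  simp only [key, Finset.sum_add_distrib, Finset.sum_ite_eq', mem_univ, if_true]

/-- Hamming norm as a filter card. -/
lemma hn_eq {ι : Type*} [Fintype ι] (y : ι → ZMod 2) :
    hammingNorm y = (univ.filter fun i => y i ≠ 0).card := by
  simp [hammingNorm]

/-- The set of edges crossing `S`. -/
noncomputable def crossSet (S : Finset V) : Finset ↥G.edgeFinset :=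
  univ.filter fun e => (∃ x ∈ (e : Sym2 V), x ∈ S) ∧ (∃ x ∈ (e : Sym2 V), x ∉ S)

lemma weight_eq (x : V → ZMod 2) :
    hammingNorm (phi G x) = (crossSet G (univ.filter fun v => x v = 1)).card := by
  rw [hn_eq, crossSet]
  congr 1
  ext ⟨e, he⟩
  simp only [mem_filter, mem_univ, true_and]
  revert he
  induction e using Sym2.ind with
  | _ u w =>
    intro he
    have huw : u ≠ w := (G.mem_edgeSet.1 (mem_edgeFinset.1 he)).ne
    rw [phi_apply_edge G x u w huw he]
    have key : ∀ a b : ZMod 2, (a + b ≠ 0) ↔ ((a = 1 ∨ b = 1) ∧ (¬a = 1 ∨ ¬b = 1)) := by decide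
    simp [Sym2.mem_iff, key]

lemma crossSet_singleton_card (v : V) [DecidableEq V] :
    (crossSet G {v}).card = G.degree v := by
  have h1 : crossSet G {v} = univ.filter fun e : ↥G.edgeFinset => v ∈ (e : Sym2 V) := by
    ext ⟨e, he⟩
    simp only [crossSet, mem_filter, mem_univ, true_and]
    revert he
    induction e using Sym2.ind with
    | _ u w =>
      intro he
      have huw : u ≠ w := (G.mem_edgeSet.1 (mem_edgeFinset.1 he)).ne
      simp only [Sym2.mem_iff, Finset.mem_singleton]
      constructor
      · rintro ⟨h1, -⟩
        rcases h1 with ⟨x, hx | hx, hx2⟩ <;> subst hx <;> [left; right] <;> exact hx2.symm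
      · intro h
        refine ⟨?_, ?_⟩
        · rcases h with h | h
          · exact ⟨u, Or.inl rfl, h.symm⟩
          · exact ⟨w, Or.inr rfl, h.symm⟩
        · rcases h with h | h
          · exact ⟨w, Or.inr rfl, fun hw => huw (h.symm.trans hw.symm)⟩
          · exact ⟨u, Or.inl rfl, fun hu => huw (hu.trans h)⟩
  rw [h1]
  have h2 : (univ.filter fun e : ↥G.edgeFinset => v ∈ (e : Sym2 V)).card
      = (G.edgeFinset.filter fun e => v ∈ e).card := by
    apply Finset.card_nbij (i := Subtype.val)
    · intro a ha
      simp only [Finset.mem_coe, mem_filter, mem_univ, true_and] at ha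
      simp only [Finset.mem_coe, mem_filter]
      exact ⟨a.2, ha⟩
    · exact fun a _ b _ hab => Subtype.ext hab
    · intro b hb
      simp only [Finset.coe_filter, Set.mem_setOf_eq] at hb
      exact ⟨⟨b, hb.1⟩, by simp [hb.2], rfl⟩
  rw [h2, ← incidenceFinset_eq_filter, card_incidenceFinset_eq_degree]

end LinAlg

/-! ### Auxiliary arithmetic -/

lemma isUnit_prod_iff {M N : Type*} [Monoid M] [Monoid N] (z : M × N) :
    IsUnit z ↔ IsUnit z.1 ∧ IsUnit z.2 :=
  ⟨fun h => ⟨h.map (MonoidHom.fst M N), h.map (MonoidHom.snd M N)⟩,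
   fun ⟨⟨u, hu⟩, ⟨v, hv⟩⟩ =>
     ⟨⟨((u : M), (v : N)), ((↑u⁻¹ : M), (↑v⁻¹ : N)), by ext <;> simp, by ext <;> simp⟩, by
        ext <;> simp [hu, hv]⟩⟩

lemma int_arith (p a b a' b' : ℤ) (hp : 3 ≤ p) (hodd : Odd p)
    (ha0 : 0 ≤ a) (hb0 : 0 ≤ b) (ha0' : 0 ≤ a') (hb0' : 0 ≤ b')
    (ha : a + a' = p) (hb : b + b' = p) (h1 : 1 ≤ a + b) (h2 : 1 ≤ a' + b') :
    p - 1 + min a b' + min a' b ≤ a * b' + a' * b := by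
  obtain ⟨k, hk⟩ := hodd
  rcases min_cases a b' with ⟨hm1, hc1⟩ | ⟨hm1, hc1⟩ <;>
    rcases min_cases a' b with ⟨hm2, hc2⟩ | ⟨hm2, hc2⟩ <;> rw [hm1, hm2]
  · have hab : a + b = p := by omega
    have hne : a ≠ b := by omega
    have hsq : 1 ≤ (a - b) ^ 2 := by
      rcases lt_or_gt_of_ne hne with h | h <;> nlinarith
    nlinarith [hsq]
  · have h3 : a + b ≤ p - 1 := by omega
    have t1 : 0 ≤ a * (a - 1) := by rcases (by omega : a = 0 ∨ 1 ≤ a) with h | h <;> nlinarith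
    have t2 : 0 ≤ b * (b - 1) := by rcases (by omega : b = 0 ∨ 1 ≤ b) with h | h <;> nlinarith
    have t3 : 0 ≤ (a + b - 1) * (p - 1 - (a + b)) := by
      apply mul_nonneg <;> omega
    nlinarith [t1, t2, t3]
  · have h3 : a' + b' ≤ p - 1 := by omega
    have t1 : 0 ≤ a' * (a' - 1) := by rcases (by omega : a' = 0 ∨ 1 ≤ a') with h | h <;> nlinarith
    have t2 : 0 ≤ b' * (b' - 1) := by rcases (by omega : b' = 0 ∨ 1 ≤ b') with h | h <;> nlinarith
    have t3 : 0 ≤ (a' + b' - 1) * (p - 1 - (a' + b')) := by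
      apply mul_nonneg <;> omega
    nlinarith [t1, t2, t3]
  · have t1 : 0 ≤ (a - b' - 1) * b' := by apply mul_nonneg <;> omega
    have t2 : 0 ≤ (a' - b - 1) * b := by apply mul_nonneg <;> omega
    nlinarith [t1, t2, sq_nonneg (b - b')]

lemma nat_arith (p a b a' b' : ℕ) (hp : 3 ≤ p) (hodd : Odd p)
    (ha : a + a' = p) (hb : b + b' = p) (h1 : 1 ≤ a + b) (h2 : 1 ≤ a' + b') :
    p - 1 ≤ (a * b' - min a b') + (a' * b - min a' b) := by
  have key : (p : ℤ) - 1 + min (a:ℤ) (b':ℤ) + min (a':ℤ) (b:ℤ) ≤ a * b' + a' * b :=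
    int_arith p a b a' b' (by exact_mod_cast hp) (by exact_mod_cast hodd.natCast)
      (by positivity) (by positivity) (by positivity) (by positivity)
      (by exact_mod_cast ha) (by exact_mod_cast hb)
      (by exact_mod_cast h1) (by exact_mod_cast h2)
  have m1 : min a b' ≤ a * b' := by
    rcases Nat.eq_zero_or_pos b' with h | h
    · simp [h]
    · calc min a b' ≤ a := min_le_left _ _
        _ = a * 1 := (mul_one a).symm
        _ ≤ a * b' := Nat.mul_le_mul_left a h
  have m2 : min a' b ≤ a' * b := by
    rcases Nat.eq_zero_or_pos b with h | h
    · simp [h]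
    · calc min a' b ≤ a' := min_le_left _ _
        _ = a' * 1 := (mul_one a').symm
        _ ≤ a' * b := Nat.mul_le_mul_left a' h
  have key' : p - 1 + min a b' + min a' b ≤ a * b' + a' * b := by
    push_cast at key ⊢
    omega
  omega

/-! ### The unit graph of `ZMod (2 * p)` -/

section UnitGraph

variable (p : ℕ) [Fact p.Prime] (hodd : Odd p)

noncomputable def crt (hodd : Odd p) : ZMod (2 * p) ≃+* ZMod 2 × ZMod p :=
  ZMod.chineseRemainder hodd.coprime_two_left

lemma adj_iff (x y : ZMod (2 * p)) :
    (unitGraph (2 * p)).Adj x y ↔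
      (crt p hodd x).1 + (crt p hodd y).1 = 1 ∧ (crt p hodd x).2 + (crt p hodd y).2 ≠ 0 := by
  have hu : IsUnit (x + y) ↔ IsUnit (crt p hodd (x + y)) :=
    ⟨fun h => h.map (crt p hodd).toRingHom,
     fun h => by simpa using h.map (crt p hodd).symm.toRingHom⟩
  have h2 : ∀ u : ZMod 2, IsUnit u ↔ u = 1 := by decide
  rw [show (unitGraph (2*p)).Adj x y ↔ x ≠ y ∧ IsUnit (x + y) from Iff.rfl, hu,
    map_add, isUnit_prod_iff, h2, isUnit_iff_ne_zero]
  constructor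
  · rintro ⟨-, h⟩; exact h
  · rintro ⟨h1, h2⟩
    refine ⟨fun hxy => ?_, h1, h2⟩
    subst hxy
    have : ∀ a : ZMod 2, a + a ≠ 1 := by decide
    exact this _ h1

variable [NeZero (2 * p)]

lemma neighborFinset_eq (v : ZMod (2 * p)) :
    (unitGraph (2 * p)).neighborFinset v =
      (univ.filter fun c : ZMod p => (crt p hodd v).2 + c ≠ 0).image
        (fun c => (crt p hodd).symm (1 - (crt p hodd v).1, c)) := by
  ext w
  simp only [mem_neighborFinset, adj_iff p hodd, mem_image, mem_filter, mem_univ, true_and]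
  constructor
  · rintro ⟨h1, h2⟩
    refine ⟨(crt p hodd w).2, h2, ?_⟩
    have : (1 - (crt p hodd v).1, (crt p hodd w).2) = crt p hodd w := by
      ext
      · simp only []
        have : ∀ a b : ZMod 2, a + b = 1 → 1 - a = b := by decide
        exact this _ _ h1
      · rfl
    rw [this, RingEquiv.symm_apply_apply]
  · rintro ⟨c, hc, rfl⟩
    rw [RingEquiv.apply_symm_apply]
    constructor
    · have : ∀ a : ZMod 2, a + (1 - a) = 1 := by decide
      exact this _
    · exact hc

include hodd in
lemma degree_eq (v : ZMod (2 * p)) : (unitGraph (2 * p)).degree v = p - 1 := by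
  have hp : p ≠ 0 := (Fact.out : p.Prime).ne_zero
  haveI : NeZero p := ⟨hp⟩
  rw [SimpleGraph.degree, neighborFinset_eq p hodd v, Finset.card_image_of_injective _
    (fun a b hab => by
      have := (crt p hodd).symm.injective hab
      exact (Prod.ext_iff.1 this).2)]
  have : (univ.filter fun c : ZMod p => (crt p hodd v).2 + c ≠ 0)
      = univ.erase (-(crt p hodd v).2) := by
    ext c
    simp only [mem_filter, mem_univ, true_and, Finset.mem_erase, and_true]
    constructor
    · rintro h rfl; exact h (add_neg_cancel _)
    · intro h h0; exact h (eq_neg_of_add_eq_zero_right h0)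
  rw [this, Finset.card_erase_of_mem (mem_univ _), Finset.card_univ, ZMod.card]

include hodd in
lemma edge_count : (unitGraph (2 * p)).edgeFinset.card = p * (p - 1) := by
  have h := (unitGraph (2 * p)).sum_degrees_eq_twice_card_edges
  simp only [degree_eq p hodd, Finset.sum_const, Finset.card_univ, ZMod.card, smul_eq_mul,
    mul_assoc] at h
  omega

lemma card_parity (u : ZMod 2) :
    (univ.filter fun v : ZMod (2 * p) => (crt p hodd v).1 = u).card = p := by
  have hp : p ≠ 0 := (Fact.out : p.Prime).ne_zero
  haveI : NeZero p := ⟨hp⟩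
  have hcard : (univ : Finset (ZMod p)).card = p := by rw [Finset.card_univ, ZMod.card]
  refine Eq.trans ?_ hcard
  apply Finset.card_bij' (fun v _ => (crt p hodd v).2)
    (fun c _ => (crt p hodd).symm (u, c))
  · intro a ha; exact mem_univ _
  · intro c _
    simp only [mem_filter, mem_univ, true_and]
    rw [RingEquiv.apply_symm_apply]
  · intro v hv
    simp only [mem_filter, mem_univ, true_and] at hv
    rw [show (u, (crt p hodd v).2) = crt p hodd v from Prod.ext hv.symm rfl,
      RingEquiv.symm_apply_apply]
  · intro c _
    rw [RingEquiv.apply_symm_apply]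

/-- The number of non-adjacent pairs between an "even" set and an "odd" set is small. -/
lemma pairs_bound (X Y : Finset (ZMod (2 * p)))
    (hX : ∀ x ∈ X, (crt p hodd x).1 = 0) (hY : ∀ y ∈ Y, (crt p hodd y).1 = 1) :
    X.card * Y.card - min X.card Y.card
      ≤ ((X ×ˢ Y).filter fun z => (unitGraph (2 * p)).Adj z.1 z.2).card := by
  classical
  have hsum := Finset.card_filter_add_card_filter_not
    (s := X ×ˢ Y) (p := fun z => (unitGraph (2 * p)).Adj z.1 z.2)
  rw [Finset.card_product] at hsum
  set N := (X ×ˢ Y).filter fun z => ¬ (unitGraph (2 * p)).Adj z.1 z.2 with hN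
  have key : ∀ z ∈ N, (crt p hodd z.2) = (1, -(crt p hodd z.1).2) ∧
      (crt p hodd z.1) = (0, -(crt p hodd z.2).2) := by
    rintro ⟨x, y⟩ hz
    simp only [hN, mem_filter, Finset.mem_product] at hz
    obtain ⟨⟨hx, hy⟩, hnadj⟩ := hz
    rw [adj_iff p hodd] at hnadj
    push_neg at hnadj
    have h1 : (crt p hodd x).1 + (crt p hodd y).1 = 1 := by
      rw [hX x hx, hY y hy]; decide
    have h2 := hnadj h1
    constructor
    · exact Prod.ext (hY y hy) (by rw [neg_eq_of_add_eq_zero_right h2])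
    · exact Prod.ext (hX x hx)
        (by rw [show (crt p hodd x).2 = -(crt p hodd y).2 from
          eq_neg_of_add_eq_zero_left h2])
  have hN1 : N.card ≤ X.card := by
    apply Finset.card_le_card_of_injOn (fun z => z.1)
    · rintro ⟨x, y⟩ hz
      simp only [hN, Finset.mem_coe, mem_filter, Finset.mem_product] at hz
      exact hz.1.1
    · rintro ⟨x1, y1⟩ h1 ⟨x2, y2⟩ h2 heq
      simp only at heq
      subst heq
      have k1 := (key _ (by simpa using h1)).1
      have k2 := (key _ (by simpa using h2)).1
      have : y1 = y2 := (crt p hodd).injective (k1.trans k2.symm)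
      simp [this]
  have hN2 : N.card ≤ Y.card := by
    apply Finset.card_le_card_of_injOn (fun z => z.2)
    · rintro ⟨x, y⟩ hz
      simp only [hN, Finset.mem_coe, mem_filter, Finset.mem_product] at hz
      exact hz.1.2
    · rintro ⟨x1, y1⟩ h1 ⟨x2, y2⟩ h2 heq
      simp only at heq
      subst heq
      have k1 := (key _ (by simpa using h1)).2
      have k2 := (key _ (by simpa using h2)).2
      have : x1 = x2 := (crt p hodd).injective (k1.trans k2.symm)
      simp [this]
  omega

end UnitGraph

section Main

variable (p : ℕ) [Fact p.Prime] (hodd : Odd p) [NeZero (2 * p)]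

noncomputable def Lset : Finset (ZMod (2 * p)) := univ.filter fun v => (crt p hodd v).1 = 0
noncomputable def Rset : Finset (ZMod (2 * p)) := univ.filter fun v => (crt p hodd v).1 = 1

lemma crossSet_card_eq (S : Finset (ZMod (2 * p))) :
    (crossSet (unitGraph (2 * p)) S).card =
      (((Lset p hodd ∩ S) ×ˢ (Rset p hodd \ S)).filter
        fun z => (unitGraph (2 * p)).Adj z.1 z.2).card
      + (((Lset p hodd \ S) ×ˢ (Rset p hodd ∩ S)).filter
        fun z => (unitGraph (2 * p)).Adj z.1 z.2).card := by
  classical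
  set P1 := ((Lset p hodd ∩ S) ×ˢ (Rset p hodd \ S)).filter
    (fun z => (unitGraph (2 * p)).Adj z.1 z.2) with hP1
  set P2 := ((Lset p hodd \ S) ×ˢ (Rset p hodd ∩ S)).filter
    (fun z => (unitGraph (2 * p)).Adj z.1 z.2) with hP2
  have hdisj : Disjoint P1 P2 := by
    rw [Finset.disjoint_left]
    rintro ⟨x, y⟩ h1 h2
    simp only [hP1, hP2, mem_filter, Finset.mem_product, mem_inter, mem_sdiff] at h1 h2
    exact h2.1.1.2 h1.1.1.2
  rw [← Finset.card_union_of_disjoint hdisj]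
  have hmem : ∀ z ∈ P1 ∪ P2, (unitGraph (2 * p)).Adj z.1 z.2 ∧
      (crt p hodd z.1).1 = 0 ∧ (crt p hodd z.2).1 = 1 ∧ (z.1 ∈ S ↔ z.2 ∉ S) := by
    rintro ⟨x, y⟩ hz
    rcases Finset.mem_union.1 hz with h | h <;>
      simp only [hP1, hP2, mem_filter, Finset.mem_product, mem_inter, mem_sdiff, Lset, Rset,
        mem_univ, true_and] at h
    · exact ⟨h.2, h.1.1.1, h.1.2.1, by tauto⟩
    · exact ⟨h.2, h.1.1.1, h.1.2.1, by tauto⟩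
  symm
  apply Finset.card_bij (i := fun z hz =>
    (⟨s(z.1, z.2), mem_edgeFinset.2 ((unitGraph (2 * p)).mem_edgeSet.2 (hmem z hz).1)⟩ :
      ↥(unitGraph (2 * p)).edgeFinset))
  · intro z hz
    obtain ⟨hadj, hz1, hz2, hiff⟩ := hmem z hz
    simp only [crossSet, mem_filter, mem_univ, true_and, Sym2.mem_iff]
    by_cases hzS : z.1 ∈ S
    · exact ⟨⟨z.1, Or.inl rfl, hzS⟩, ⟨z.2, Or.inr rfl, hiff.1 hzS⟩⟩
    · have : z.2 ∈ S := by tauto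
      exact ⟨⟨z.2, Or.inr rfl, this⟩, ⟨z.1, Or.inl rfl, hzS⟩⟩
  · intro z1 hz1 z2 hz2 heq
    simp only [Subtype.mk.injEq, Sym2.eq_iff] at heq
    rcases heq with ⟨h1, h2⟩ | ⟨h1, h2⟩
    · exact Prod.ext h1 h2
    · exfalso
      have k1 := (hmem z1 hz1).2.1
      have k2 := (hmem z2 hz2).2.2.1
      rw [h1, k2] at k1
      exact absurd k1 (by decide)
  · rintro ⟨e, he⟩ hce
    revert hce
    induction e using Sym2.ind with
    | _ u w =>
      intro hce
      have hadj : (unitGraph (2 * p)).Adj u w :=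
        (unitGraph (2 * p)).mem_edgeSet.1 (mem_edgeFinset.1 he)
      have hsum : (crt p hodd u).1 + (crt p hodd w).1 = 1 :=
        ((adj_iff p hodd u w).1 hadj).1
      have hcross : (u ∈ S ∨ w ∈ S) ∧ (u ∉ S ∨ w ∉ S) := by
        simp only [crossSet, mem_filter, mem_univ, true_and, Sym2.mem_iff] at hce
        obtain ⟨⟨y, hy1, hy2⟩, ⟨z, hz1, hz2⟩⟩ := hce
        constructor
        · rcases hy1 with rfl | rfl
          · exact Or.inl hy2
          · exact Or.inr hy2
        · rcases hz1 with rfl | rfl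
          · exact Or.inl hz2
          · exact Or.inr hz2
      have hpar : ((crt p hodd u).1 = 0 ∧ (crt p hodd w).1 = 1)
          ∨ ((crt p hodd u).1 = 1 ∧ (crt p hodd w).1 = 0) := by
        have : ∀ a b : ZMod 2, a + b = 1 → (a = 0 ∧ b = 1) ∨ (a = 1 ∧ b = 0) := by decide
        exact this _ _ hsum
      rcases hpar with ⟨hu0, hw1⟩ | ⟨hu1, hw0⟩
      · refine ⟨(u, w), ?_, rfl⟩
        by_cases huS : u ∈ S
        · apply Finset.mem_union_left
          simp only [hP1, mem_filter, Finset.mem_product, mem_inter, mem_sdiff, Lset, Rset,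
            mem_univ, true_and]
          exact ⟨⟨⟨hu0, huS⟩, hw1, by tauto⟩, hadj⟩
        · apply Finset.mem_union_right
          simp only [hP2, mem_filter, Finset.mem_product, mem_inter, mem_sdiff, Lset, Rset,
            mem_univ, true_and]
          exact ⟨⟨⟨hu0, huS⟩, hw1, by tauto⟩, hadj⟩
      · refine ⟨(w, u), ?_, Subtype.ext (Sym2.eq_swap)⟩
        by_cases hwS : w ∈ S
        · apply Finset.mem_union_left
          simp only [hP1, mem_filter, Finset.mem_product, mem_inter, mem_sdiff, Lset, Rset,
            mem_univ, true_and]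
          exact ⟨⟨⟨hw0, hwS⟩, hu1, by tauto⟩, hadj.symm⟩
        · apply Finset.mem_union_right
          simp only [hP2, mem_filter, Finset.mem_product, mem_inter, mem_sdiff, Lset, Rset,
            mem_univ, true_and]
          exact ⟨⟨⟨hw0, hwS⟩, hu1, by tauto⟩, hadj.symm⟩

include hodd in
lemma cross_lower (S : Finset (ZMod (2 * p))) (h1 : S.Nonempty) (h2 : S ≠ univ) :
    p - 1 ≤ (crossSet (unitGraph (2 * p)) S).card := by
  have hp3 : 3 ≤ p := by
    have h2 := (Fact.out : p.Prime).two_le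
    obtain ⟨k, hk⟩ := hodd
    omega
  rw [crossSet_card_eq p hodd S]
  have haa : (Lset p hodd ∩ S).card + (Lset p hodd \ S).card = p := by
    rw [Finset.card_inter_add_card_sdiff]
    exact card_parity p hodd 0
  have hbb : (Rset p hodd ∩ S).card + (Rset p hodd \ S).card = p := by
    rw [Finset.card_inter_add_card_sdiff]
    exact card_parity p hodd 1
  have hzm : ∀ a : ZMod 2, a = 0 ∨ a = 1 := by decide
  have h1' : 1 ≤ (Lset p hodd ∩ S).card + (Rset p hodd ∩ S).card := by
    obtain ⟨v, hv⟩ := h1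
    rcases hzm ((crt p hodd v).1) with h | h
    · have : v ∈ Lset p hodd ∩ S := by
        simp only [Lset, mem_inter, mem_filter, mem_univ, true_and]; exact ⟨h, hv⟩
      have := Finset.card_pos.2 ⟨v, this⟩
      omega
    · have : v ∈ Rset p hodd ∩ S := by
        simp only [Rset, mem_inter, mem_filter, mem_univ, true_and]; exact ⟨h, hv⟩
      have := Finset.card_pos.2 ⟨v, this⟩
      omega
  have h2' : 1 ≤ (Lset p hodd \ S).card + (Rset p hodd \ S).card := by
    obtain ⟨v, hv⟩ : ∃ v, v ∉ S := by
      by_contra h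
      push_neg at h
      exact h2 (Finset.eq_univ_iff_forall.2 h)
    rcases hzm ((crt p hodd v).1) with h | h
    · have : v ∈ Lset p hodd \ S := by
        simp only [Lset, mem_sdiff, mem_filter, mem_univ, true_and]; exact ⟨h, hv⟩
      have := Finset.card_pos.2 ⟨v, this⟩
      omega
    · have : v ∈ Rset p hodd \ S := by
        simp only [Rset, mem_sdiff, mem_filter, mem_univ, true_and]; exact ⟨h, hv⟩
      have := Finset.card_pos.2 ⟨v, this⟩
      omega
  have B1 := pairs_bound p hodd (Lset p hodd ∩ S) (Rset p hodd \ S)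
    (fun x hx => by simpa [Lset] using (Finset.mem_inter.1 hx).1)
    (fun y hy => by simpa [Rset] using (Finset.mem_sdiff.1 hy).1)
  have B2 := pairs_bound p hodd (Lset p hodd \ S) (Rset p hodd ∩ S)
    (fun x hx => by simpa [Lset] using (Finset.mem_sdiff.1 hx).1)
    (fun y hy => by simpa [Rset] using (Finset.mem_inter.1 hy).1)
  have A := nat_arith p (Lset p hodd ∩ S).card (Rset p hodd ∩ S).card
    (Lset p hodd \ S).card (Rset p hodd \ S).card hp3 hodd haa hbb h1' h2'
  omega

include hodd in
lemma ker_phi : LinearMap.ker (phi (unitGraph (2 * p)))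
    = Submodule.span (ZMod 2) {(1 : ZMod (2 * p) → ZMod 2)} := by
  have hp3 : 3 ≤ p := by
    have h2 := (Fact.out : p.Prime).two_le
    obtain ⟨k, hk⟩ := hodd
    omega
  apply le_antisymm
  · intro x hx
    rw [LinearMap.mem_ker] at hx
    have hw : (crossSet (unitGraph (2 * p)) (univ.filter fun v => x v = 1)).card = 0 := by
      rw [← weight_eq, hx, hammingNorm_zero]
    set S := univ.filter fun v => x v = 1 with hS
    have hnot : ¬(S.Nonempty ∧ S ≠ univ) := by
      rintro ⟨hne, hneq⟩
      have := cross_lower p hodd S hne hneq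
      omega
    rcases Finset.eq_empty_or_nonempty S with hemp | hne
    · have hx0 : x = 0 := by
        funext v
        have hv : v ∉ S := hemp ▸ Finset.notMem_empty v
        simp only [hS, mem_filter, mem_univ, true_and] at hv
        have key : ∀ a : ZMod 2, ¬a = 1 → a = 0 := by decide
        exact key _ hv
      rw [hx0]
      exact Submodule.zero_mem _
    · have hu : S = univ := by
        by_contra hneq
        exact hnot ⟨hne, hneq⟩
      have hx1 : x = 1 := by
        funext v
        have hv : v ∈ S := hu ▸ mem_univ v
        simp only [hS, mem_filter, mem_univ, true_and] at hv
        simpa using hv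
      rw [hx1]
      exact Submodule.subset_span rfl
  · rw [Submodule.span_le, Set.singleton_subset_iff, SetLike.mem_coe, LinearMap.mem_ker]
    funext e
    obtain ⟨e, he⟩ := e
    revert he
    induction e using Sym2.ind with
    | _ u w =>
      intro he
      have huw : u ≠ w :=
        ((unitGraph (2 * p)).mem_edgeSet.1 (mem_edgeFinset.1 he)).ne
      rw [phi_apply_edge _ _ _ _ huw he]
      simp only [Pi.one_apply, Pi.zero_apply]
      rfl

include hodd in
lemma row_weight (v : ZMod (2 * p)) :
    hammingNorm (incMat (unitGraph (2 * p)) v) = p - 1 := by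
  rw [← phi_single, weight_eq]
  have h := crossSet_singleton_card (unitGraph (2 * p)) v
  rw [degree_eq p hodd v] at h
  rw [← h]
  congr 1
  congr 1
  ext w
  simp only [mem_filter, mem_univ, true_and, Finset.mem_singleton, Pi.single_apply]
  by_cases hwv : w = v <;> simp [hwv]

include hodd in
theorem unitGraph_ZMod_two_p_code_params' :
    (unitGraph (2 * p)).edgeFinset.card = p * (p - 1) ∧
      Module.finrank (ZMod 2) (rowCode (unitGraph (2 * p))) = 2 * p - 1 ∧
      minDist (unitGraph (2 * p)) = p - 1 := by
  have hp3 : 3 ≤ p := by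
    have h2 := (Fact.out : p.Prime).two_le
    obtain ⟨k, hk⟩ := hodd
    omega
  refine ⟨edge_count p hodd, ?_, ?_⟩
  · rw [← range_phi]
    have hrank := LinearMap.finrank_range_add_finrank_ker (phi (unitGraph (2 * p)))
    rw [ker_phi p hodd] at hrank
    have hker : Module.finrank (ZMod 2)
        (Submodule.span (ZMod 2) {(1 : ZMod (2 * p) → ZMod 2)}) = 1 := by
      apply finrank_span_singleton
      intro h
      exact one_ne_zero (congr_fun h (0 : ZMod (2 * p)))
    have hdom : Module.finrank (ZMod 2) (ZMod (2 * p) → ZMod 2) = 2 * p := by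
      rw [Module.finrank_fintype_fun_eq_card, ZMod.card]
    rw [hker, hdom] at hrank
    omega
  · have hmem : (p - 1) ∈ {w | ∃ c ∈ rowCode (unitGraph (2 * p)), c ≠ 0 ∧ w = hammingNorm c} := by
      refine ⟨incMat (unitGraph (2 * p)) 0, Submodule.subset_span ⟨0, rfl⟩, ?_,
        (row_weight p hodd 0).symm⟩
      intro h
      have hw := row_weight p hodd 0
      rw [h, hammingNorm_zero] at hw
      omega
    rw [minDist]
    apply le_antisymm
    · exact Nat.sInf_le hmem
    · apply le_csInf ⟨_, hmem⟩
      rintro w ⟨c, hc, hc0, rfl⟩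
      rw [← range_phi] at hc
      obtain ⟨x, rfl⟩ := hc
      rw [weight_eq]
      set S := univ.filter fun v => x v = 1 with hS
      have hcard : (crossSet (unitGraph (2 * p)) S).card ≠ 0 := by
        rw [← weight_eq]
        exact hammingNorm_ne_zero_iff.2 hc0
      obtain ⟨e, he⟩ := Finset.card_pos.1 (Nat.pos_of_ne_zero hcard)
      simp only [crossSet, mem_filter, mem_univ, true_and] at he
      obtain ⟨⟨y, _, hy⟩, ⟨z, _, hz⟩⟩ := he
      exact cross_lower p hodd S ⟨y, hy⟩ (fun h => hz (h ▸ mem_univ z))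

end Main

theorem unitGraph_ZMod_two_p_code_params (p : ℕ) [Fact p.Prime] (hodd : Odd p)
    [NeZero (2 * p)] :
    (unitGraph (2 * p)).edgeFinset.card = p * (p - 1) ∧
      Module.finrank (ZMod 2) (rowCode (unitGraph (2 * p))) = 2 * p - 1 ∧
      minDist (unitGraph (2 * p)) = p - 1 :=
  unitGraph_ZMod_two_p_code_params' p hodd
end

section
/- The binary code generated by the incidence matrix of the unit graph G(Z_5) is an [8, 4, 3] code over F_2. -/
open SimpleGraph Finset
open scoped Classical

/-! ### Auxiliary material -/

section Aux

instance f5 : Fact (Nat.Prime 5) := ⟨by norm_num⟩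

lemma incMat_apply' {V : Type*} [Fintype V] (G : SimpleGraph V) (v : V) (e : G.edgeFinset)
    (inst : Decidable (v ∈ (e : Sym2 V))) :
    incMat G v e = @ite _ (v ∈ (e : Sym2 V)) inst 1 0 := by
  unfold incMat
  by_cases h : v ∈ (e : Sym2 V)
  · rw [if_pos h, if_pos h]
  · rw [if_neg h, if_neg h]

/-- explicit list of edges of `unitGraph 5` -/
def ed : Fin 8 → Sym2 (ZMod 5) :=
  ![s(0,1), s(0,2), s(0,3), s(0,4), s(1,2), s(1,3), s(2,4), s(3,4)]

lemma hE : (unitGraph 5).edgeFinset =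
    {s(0,1), s(0,2), s(0,3), s(0,4), s(1,2), s(1,3), s(2,4), s(3,4)} := by
  ext e
  induction e using Sym2.ind with
  | _ x y =>
    rw [SimpleGraph.mem_edgeFinset]
    simp only [mem_edgeFinset, mem_edgeSet, unitGraph, unitGraphR, isUnit_iff_ne_zero]
    revert x y
    decide

lemma hed : ∀ i : Fin 8, ed i ∈ (unitGraph 5).edgeFinset := by
  rw [hE]; decide

/-- the explicit incidence matrix -/
def Mv : ZMod 5 → Fin 8 → ZMod 2 := fun v =>
  (![![1,1,1,1,0,0,0,0],
     ![1,0,0,0,1,1,0,0],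
     ![0,1,0,0,1,0,1,0],
     ![0,0,1,0,0,1,0,1],
     ![0,0,0,1,0,0,1,1]] : Fin 5 → Fin 8 → ZMod 2) ⟨v.val, ZMod.val_lt v⟩

lemma key_ite : ∀ (v : ZMod 5) (j : Fin 8),
    (if v ∈ ed j then 1 else 0 : ZMod 2) = Mv v j := by decide

end Aux

theorem unitGraph_ZMod_five_code_params :
    (unitGraph 5).edgeFinset.card = 8 ∧
      Module.finrank (ZMod 2) (rowCode (unitGraph 5)) = 4 ∧
      minDist (unitGraph 5) = 3 := by
  have hcard : (unitGraph 5).edgeFinset.card = 8 := by rw [hE]; decide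
  -- the enumeration of edges
  let eIdx : Fin 8 → (unitGraph 5).edgeFinset := fun i => ⟨ed i, hed i⟩
  have hsurj : Function.Surjective eIdx := by
    rintro ⟨e, he⟩
    rw [hE] at he
    fin_cases he
    exacts [⟨0, rfl⟩, ⟨1, rfl⟩, ⟨2, rfl⟩, ⟨3, rfl⟩, ⟨4, rfl⟩, ⟨5, rfl⟩, ⟨6, rfl⟩, ⟨7, rfl⟩]
  have hbij : Function.Bijective eIdx := by
    rw [Fintype.bijective_iff_surjective_and_card]
    refine ⟨hsurj, ?_⟩
    rw [Fintype.card_fin, Fintype.card_coe, hcard]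
  let ε : Fin 8 ≃ (unitGraph 5).edgeFinset := Equiv.ofBijective eIdx hbij
  let Φ : ((unitGraph 5).edgeFinset → ZMod 2) ≃ₗ[ZMod 2] (Fin 8 → ZMod 2) :=
    LinearEquiv.funCongrLeft (ZMod 2) (ZMod 2) ε
  have hΦ_apply : ∀ (c : (unitGraph 5).edgeFinset → ZMod 2) (j : Fin 8), Φ c j = c (eIdx j) := fun _ _ => rfl
  have hΦr : ∀ v : ZMod 5, Φ (incMat (unitGraph 5) v) = Mv v := by
    intro v
    funext j
    rw [hΦ_apply, incMat_apply' (unitGraph 5) v (eIdx j) (Sym2.Mem.decidable _ _)]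
    exact key_ite v j
  have hmap : (rowCode (unitGraph 5)).map Φ.toLinearMap
      = Submodule.span (ZMod 2) (Set.range Mv) := by
    rw [rowCode, Submodule.map_span]
    show Submodule.span _ (_ '' Set.range (fun v => incMat (unitGraph 5) v)) = _
    rw [← Set.range_comp]
    congr 1
    exact congrArg Set.range (funext hΦr)
  -- dimension
  have hdim : Module.finrank (ZMod 2) (rowCode (unitGraph 5)) = 4 := by
    rw [← LinearEquiv.finrank_map_eq Φ (rowCode (unitGraph 5)), hmap]
    let M4 : Fin 4 → Fin 8 → ZMod 2 := ![Mv 1, Mv 2, Mv 3, Mv 4]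
    have hspan : Submodule.span (ZMod 2) (Set.range Mv)
        = Submodule.span (ZMod 2) (Set.range M4) := by
      apply le_antisymm
      · rw [Submodule.span_le]
        rintro _ ⟨v, rfl⟩
        have h0 : Mv 0 = M4 0 + M4 1 + M4 2 + M4 3 := by decide
        have hv : v = 0 ∨ v = 1 ∨ v = 2 ∨ v = 3 ∨ v = 4 := by revert v; decide
        rcases hv with rfl | rfl | rfl | rfl | rfl
        · rw [h0]
          exact Submodule.add_mem _ (Submodule.add_mem _ (Submodule.add_mem _
            (Submodule.subset_span ⟨0, rfl⟩) (Submodule.subset_span ⟨1, rfl⟩))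
            (Submodule.subset_span ⟨2, rfl⟩)) (Submodule.subset_span ⟨3, rfl⟩)
        · exact Submodule.subset_span ⟨0, rfl⟩
        · exact Submodule.subset_span ⟨1, rfl⟩
        · exact Submodule.subset_span ⟨2, rfl⟩
        · exact Submodule.subset_span ⟨3, rfl⟩
      · rw [Submodule.span_le]
        rintro _ ⟨i, rfl⟩
        fin_cases i
        · exact Submodule.subset_span ⟨1, rfl⟩
        · exact Submodule.subset_span ⟨2, rfl⟩
        · exact Submodule.subset_span ⟨3, rfl⟩
        · exact Submodule.subset_span ⟨4, rfl⟩
    have hli : LinearIndependent (ZMod 2) M4 := by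
      rw [Fintype.linearIndependent_iff]
      decide
    rw [hspan, finrank_span_eq_card hli]
    rfl
  -- minimum distance
  have hnorm : ∀ c : (unitGraph 5).edgeFinset → ZMod 2, hammingNorm (Φ c) = hammingNorm c := by
    intro c
    exact Finset.card_equiv ε (by
      intro j
      simp only [Finset.mem_filter, Finset.mem_univ, true_and]
      exact Iff.rfl)
  have hmem_iff : ∀ c : (unitGraph 5).edgeFinset → ZMod 2, c ∈ rowCode (unitGraph 5) ↔
      Φ c ∈ Submodule.span (ZMod 2) (Set.range Mv) := by
    intro c
    rw [← hmap]
    constructor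
    · exact fun h => Submodule.mem_map_of_mem h
    · rintro h
      obtain ⟨d, hd, hdc⟩ := h
      rwa [← Φ.injective hdc]
  have hS : {w | ∃ c ∈ rowCode (unitGraph 5), c ≠ 0 ∧ w = hammingNorm c}
      = {w | ∃ d ∈ Submodule.span (ZMod 2) (Set.range Mv), d ≠ 0 ∧ w = hammingNorm d} := by
    ext w
    constructor
    · rintro ⟨c, hc, hc0, rfl⟩
      exact ⟨Φ c, (hmem_iff c).mp hc, Φ.map_ne_zero_iff.mpr hc0, (hnorm c).symm⟩
    · rintro ⟨d, hd, hd0, rfl⟩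
      refine ⟨Φ.symm d, ?_, ?_, ?_⟩
      · rw [hmem_iff, Φ.apply_symm_apply]; exact hd
      · intro h; apply hd0; rw [← Φ.apply_symm_apply d, h, map_zero]
      · rw [← hnorm (Φ.symm d), Φ.apply_symm_apply]
  have hlower : ∀ f : ZMod 5 → ZMod 2,
      (∑ v, f v • Mv v) = 0 ∨ 3 ≤ hammingNorm (∑ v, f v • Mv v) := by decide
  have h3mem : (3 : ℕ) ∈
      {w | ∃ d ∈ Submodule.span (ZMod 2) (Set.range Mv), d ≠ 0 ∧ w = hammingNorm d} := by
    refine ⟨Mv 1, Submodule.subset_span ⟨1, rfl⟩, ?_, ?_⟩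
    · decide
    · decide
  have hmin : minDist (unitGraph 5) = 3 := by
    rw [minDist, hS]
    apply le_antisymm
    · exact Nat.sInf_le h3mem
    · apply le_csInf ⟨3, h3mem⟩
      rintro w ⟨d, hd, hd0, rfl⟩
      obtain ⟨f, rfl⟩ := (Submodule.mem_span_range_iff_exists_fun (ZMod 2)).mp hd
      rcases hlower f with h | h
      · exact absurd h hd0
      · exact h
  exact ⟨hcard, hdim, hmin⟩
end
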